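/- Let F be a field of characteristic zero, R = F[x₁,…,xₙ], and I ⊆ R the ideal generated by x₁,…,xₙ. Let f, g, h ∈ R[y] satisfy f = g·h, where g is monic of degree d₁ ≥ 1 and h is monic of degree d₂ ≥ 1 in y. Assume that the reductions g mod I and h mod I (i.e., the univariate polynomials in F[y] obtained by evaluating every coefficient at x = 0) are coprime in F[y]. Let k ≥ 1, and let g̃, h̃ ∈ R[y] be monic of degrees d₁ and d₂ respectively such that the coefficient of yⁱ in g̃ − g lies in Iᵏ for every i, and the coefficient of yʲ in h̃ − h lies in Iᵏ for every j. Then there exist field constants β_{i,ℓ} ∈ F (0 ≤ i < d₁, 0 ≤ ℓ < d₁+d₂) and γ_{j,ℓ} ∈ F (0 ≤ j < d₂, 0 ≤ ℓ < d₁+d₂) such that for every i < d₁ the coefficient of yⁱ in g minus (the coefficient of yⁱ in g̃ plus Σ_ℓ β_{i,ℓ}·c_ℓ) lies in I^{k+1}, and for every j < d₂ the coefficient of yʲ in h minus (the coefficient of yʲ in h̃ plus Σ_ℓ γ_{j,ℓ}·c_ℓ) lies in I^{k+1}, where c_ℓ ∈ R denotes the coefficient of y^ℓ in g̃·h̃ −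 f. -/

import Mathlib

open Polynomial

private lemma aux_coeff_mul_mem {R : Type*} [CommRing R] (K L : Ideal R)
    (p q : R[X]) (hp : ∀ i, p.coeff i ∈ K) (hq : ∀ j, q.coeff j ∈ L) (m : ℕ) :
    (p * q).coeff m ∈ K * L := by
  rw [Polynomial.coeff_mul]
  exact Ideal.sum_mem _ fun c _ => Ideal.mul_mem_mul (hp c.1) (hq c.2)

private lemma aux_sub_const_mem {F : Type*} [Field F] {n : ℕ} (c : MvPolynomial (Fin n) F) :
    c - MvPolynomial.C (MvPolynomial.eval (fun _ : Fin n => (0 : F)) c) ∈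
      Ideal.span (Set.range (MvPolynomial.X : Fin n → MvPolynomial (Fin n) F)) := by
  classical
  rw [← Set.image_univ, MvPolynomial.mem_ideal_span_X_image]
  intro m hm
  have hm0 : m ≠ 0 := by
    intro h0
    subst h0
    rw [MvPolynomial.mem_support_iff] at hm
    apply hm
    simp [MvPolynomial.coeff_sub, MvPolynomial.eval_zero', MvPolynomial.coeff_C,
      MvPolynomial.constantCoeff_eq]
  obtain ⟨i, hi⟩ := Finsupp.ne_iff.mp hm0
  exact ⟨i, Set.mem_univ i, by simpa using hi⟩

private lemma aux_natDegree_lt {S : Type*} [CommRing S] (p : S[X]) (d : ℕ) (hd : 0 < d)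
    (h : ∀ m, d ≤ m → p.coeff m = 0) : p.natDegree < d := by
  rcases eq_or_ne p 0 with rfl | hp
  · simpa using hd
  · by_contra hc
    push_neg at hc
    exact Polynomial.leadingCoeff_ne_zero.mpr hp (h _ hc)

private lemma aux_mul_coeff_expand {S : Type*} [CommRing S] (q p : S[X]) (d : ℕ)
    (hp : p.natDegree < d) (ℓ : ℕ) :
    (q * p).coeff ℓ = ∑ i : Fin d, (q * X ^ (i : ℕ)).coeff ℓ * p.coeff i := by
  conv_lhs => rw [p.as_sum_range' d hp]
  rw [Finset.mul_sum, Polynomial.finset_sum_coeff, ← Fin.sum_univ_eq_sum_range]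
  refine Finset.sum_congr rfl fun i _ => ?_
  rw [← Polynomial.C_mul_X_pow_eq_monomial,
    show q * (C (p.coeff (i : ℕ)) * X ^ (i : ℕ)) = C (p.coeff (i : ℕ)) * (q * X ^ (i : ℕ)) by ring,
    Polynomial.coeff_C_mul]
  ring

private lemma aux_coeff_fin_sum {S : Type*} [CommRing S] {d : ℕ} (a : Fin d → S) (m : ℕ) :
    (∑ i : Fin d, C (a i) * X ^ (i : ℕ) : S[X]).coeff m
      = if hm : m < d then a ⟨m, hm⟩ else 0 := by
  rw [Polynomial.finset_sum_coeff]
  split_ifs with hm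
  · rw [Finset.sum_eq_single (⟨m, hm⟩ : Fin d)]
    · simp
    · intro b _ hb
      rw [Polynomial.coeff_C_mul, Polynomial.coeff_X_pow, if_neg, mul_zero]
      intro hmb
      exact hb (Fin.ext hmb.symm)
    · simp
  · apply Finset.sum_eq_zero
    intro b _
    rw [Polynomial.coeff_C_mul, Polynomial.coeff_X_pow, if_neg, mul_zero]
    intro hmb
    exact hm (hmb ▸ b.2)

/-- The Sylvester-type linear map sending coefficient vectors `(a, b)` of polynomials
`A = ∑ aᵢ Xⁱ` (deg < d₁), `B = ∑ bⱼ Xʲ` (deg < d₂) to the coefficient vector of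
`h₀ * A + g₀ * B` in degrees `< d₁ + d₂`. -/
private noncomputable def sylT {F : Type*} [Field F] (d₁ d₂ : ℕ) (g₀ h₀ : Polynomial F) :
    ((Fin d₁ → F) × (Fin d₂ → F)) →ₗ[F] (Fin (d₁ + d₂) → F) where
  toFun ab ℓ := (∑ i : Fin d₁, (h₀ * X ^ (i : ℕ)).coeff ℓ * ab.1 i)
    + (∑ j : Fin d₂, (g₀ * X ^ (j : ℕ)).coeff ℓ * ab.2 j)
  map_add' x y := by
    funext ℓ
    simp only [Prod.fst_add, Prod.snd_add, Pi.add_apply, mul_add, Finset.sum_add_distrib]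
    ring
  map_smul' c x := by
    funext ℓ
    simp only [Prod.smul_fst, Prod.smul_snd, Pi.smul_apply, smul_eq_mul, RingHom.id_apply,
      mul_add, Finset.mul_sum]
    congr 1 <;> exact Finset.sum_congr rfl fun i _ => by ring

/-- One step of the multivariate Newton iteration: if `f = g·h` with `g, h ∈ R[y]` monic of
degrees `d₁, d₂ ≥ 1` over `R = F[x₁,…,xₙ]`, whose reductions mod `I = ⟨x₁,…,xₙ⟩` are coprime
in `F[y]`, and `g̃, h̃` are monic approximations of `g, h` whose coefficients agree with those
of `g, h` modulo `Iᵏ`, then there are field constants `β, γ` such that adding the corresponding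
linear combinations of the coefficients `c_ℓ` of `g̃·h̃ − f` to the coefficients of `g̃, h̃`
yields approximations of the coefficients of `g, h` modulo `I^{k+1}`. -/
theorem stmt_4 {F : Type*} [Field F] [CharZero F] {n : ℕ} (k d₁ d₂ : ℕ)
    (hk : 1 ≤ k) (hd₁ : 1 ≤ d₁) (hd₂ : 1 ≤ d₂)
    (f g h g' h' : Polynomial (MvPolynomial (Fin n) F))
    (hf : f = g * h)
    (hg : g.Monic) (hgdeg : g.natDegree = d₁)
    (hh : h.Monic) (hhdeg : h.natDegree = d₂)
    (hcop : IsCoprime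
      (g.map (MvPolynomial.eval (fun _ : Fin n => (0 : F))))
      (h.map (MvPolynomial.eval (fun _ : Fin n => (0 : F)))))
    (hg' : g'.Monic) (hg'deg : g'.natDegree = d₁)
    (hh' : h'.Monic) (hh'deg : h'.natDegree = d₂)
    (hgk : ∀ i : ℕ, (g' - g).coeff i ∈
      (Ideal.span (Set.range (MvPolynomial.X : Fin n → MvPolynomial (Fin n) F))) ^ k)
    (hhk : ∀ j : ℕ, (h' - h).coeff j ∈
      (Ideal.span (Set.range (MvPolynomial.X : Fin n → MvPolynomial (Fin n) F))) ^ k) :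
    ∃ (β : Fin d₁ → Fin (d₁ + d₂) → F) (γ : Fin d₂ → Fin (d₁ + d₂) → F),
      (∀ i : Fin d₁,
        g.coeff i - (g'.coeff i + ∑ ℓ : Fin (d₁ + d₂),
            MvPolynomial.C (β i ℓ) * (g' * h' - f).coeff ℓ) ∈
          (Ideal.span (Set.range (MvPolynomial.X : Fin n → MvPolynomial (Fin n) F))) ^ (k + 1)) ∧
      (∀ j : Fin d₂,
        h.coeff j - (h'.coeff j + ∑ ℓ : Fin (d₁ + d₂),
            MvPolynomial.C (γ j ℓ) * (g' * h' - f).coeff ℓ) ∈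
          (Ideal.span (Set.range (MvPolynomial.X : Fin n → MvPolynomial (Fin n) F))) ^ (k + 1)) := by
  classical
  set I : Ideal (MvPolynomial (Fin n) F) :=
    Ideal.span (Set.range (MvPolynomial.X : Fin n → MvPolynomial (Fin n) F)) with hIdef
  set g₀ : F[X] := g.map (MvPolynomial.eval fun _ : Fin n => (0 : F)) with hg₀def
  set h₀ : F[X] := h.map (MvPolynomial.eval fun _ : Fin n => (0 : F)) with hh₀def
  have hg₀m : g₀.Monic := hg.map _
  have hh₀m : h₀.Monic := hh.map _
  have hg₀deg : g₀.natDegree = d₁ := by rw [hg.natDegree_map]; exact hgdeg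
  have hh₀deg : h₀.natDegree = d₂ := by rw [hh.natDegree_map]; exact hhdeg
  -- degrees of the perturbations
  have hδdeg : ∀ (p q : Polynomial (MvPolynomial (Fin n) F)), p.Monic → q.Monic →
      p.natDegree = q.natDegree → 1 ≤ p.natDegree → (p - q).natDegree < p.natDegree := by
    intro p q hp hq hdeq hd
    rcases eq_or_ne p q with rfl | hne
    · simpa using (show 0 < p.natDegree from hd)
    · refine (Polynomial.natDegree_lt_iff_degree_lt (sub_ne_zero.mpr hne)).mpr ?_
      have h2 : p.degree = q.degree := by
        rw [Polynomial.degree_eq_natDegree hp.ne_zero, Polynomial.degree_eq_natDegree hq.ne_zero,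
          hdeq]
      have := Polynomial.degree_sub_lt h2 hp.ne_zero (by rw [hp.leadingCoeff, hq.leadingCoeff])
      rwa [Polynomial.degree_eq_natDegree hp.ne_zero] at this
  have hδg : (g' - g).natDegree < d₁ := by
    have := hδdeg g' g hg' hg (by rw [hg'deg, hgdeg]) (by rw [hg'deg]; exact hd₁)
    rwa [hg'deg] at this
  have hδh : (h' - h).natDegree < d₂ := by
    have := hδdeg h' h hh' hh (by rw [hh'deg, hhdeg]) (by rw [hh'deg]; exact hd₂)
    rwa [hh'deg] at this
  -- the Sylvester map is injective
  set T := sylT d₁ d₂ g₀ h₀ with hTdef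
  have hTapp : ∀ (x : (Fin d₁ → F) × (Fin d₂ → F)) (ℓ : Fin (d₁ + d₂)),
      T x ℓ = (∑ i : Fin d₁, (h₀ * X ^ (i : ℕ)).coeff ℓ * x.1 i)
        + (∑ j : Fin d₂, (g₀ * X ^ (j : ℕ)).coeff ℓ * x.2 j) := fun x ℓ => rfl
  have hTinj : Function.Injective T := by
    rw [← LinearMap.ker_eq_bot, LinearMap.ker_eq_bot']
    rintro ⟨a, b⟩ hab
    set Pa : F[X] := ∑ i : Fin d₁, C (a i) * X ^ (i : ℕ) with hPadef
    set Pb : F[X] := ∑ j : Fin d₂, C (b j) * X ^ (j : ℕ) with hPbdef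
    have hPa : Pa.natDegree < d₁ := by
      refine aux_natDegree_lt _ _ hd₁ fun m hm => ?_
      rw [hPadef, aux_coeff_fin_sum, dif_neg (by omega)]
    have hPb : Pb.natDegree < d₂ := by
      refine aux_natDegree_lt _ _ hd₂ fun m hm => ?_
      rw [hPbdef, aux_coeff_fin_sum, dif_neg (by omega)]
    have hPaco : ∀ i : Fin d₁, Pa.coeff i = a i := by
      intro i
      rw [hPadef, aux_coeff_fin_sum, dif_pos i.2]
    have hPbco : ∀ j : Fin d₂, Pb.coeff j = b j := by
      intro j
      rw [hPbdef, aux_coeff_fin_sum, dif_pos j.2]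
    have hP0 : h₀ * Pa + g₀ * Pb = 0 := by
      ext m
      rw [Polynomial.coeff_add, Polynomial.coeff_zero]
      by_cases hm : m < d₁ + d₂
      · have h1 := congrFun hab ⟨m, hm⟩
        rw [hTapp] at h1
        rw [aux_mul_coeff_expand h₀ Pa d₁ hPa, aux_mul_coeff_expand g₀ Pb d₂ hPb]
        simp only [hPaco, hPbco]
        simpa using h1
      · push_neg at hm
        rw [Polynomial.coeff_eq_zero_of_natDegree_lt, Polynomial.coeff_eq_zero_of_natDegree_lt,
          add_zero]
        · calc (g₀ * Pb).natDegree ≤ g₀.natDegree + Pb.natDegree := Polynomial.natDegree_mul_le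
            _ < d₁ + d₂ := by omega
            _ ≤ m := hm
        · calc (h₀ * Pa).natDegree ≤ h₀.natDegree + Pa.natDegree := Polynomial.natDegree_mul_le
            _ < d₁ + d₂ := by omega
            _ ≤ m := hm
    have hdvd : g₀ ∣ h₀ * Pa := ⟨-Pb, by linear_combination hP0⟩
    have hPa0 : Pa = 0 := by
      have hdvd' : g₀ ∣ Pa := hcop.dvd_of_dvd_mul_left hdvd
      rcases eq_or_ne Pa 0 with h0 | h0
      · exact h0
      · refine Polynomial.eq_zero_of_dvd_of_degree_lt hdvd' ?_
        rw [Polynomial.degree_eq_natDegree h0, Polynomial.degree_eq_natDegree hg₀m.ne_zero,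
          hg₀deg]
        exact_mod_cast hPa
    have hPb0 : Pb = 0 := by
      have : g₀ * Pb = 0 := by rw [hPa0, mul_zero, zero_add] at hP0; exact hP0
      rcases mul_eq_zero.mp this with h0 | h0
      · exact absurd h0 hg₀m.ne_zero
      · exact h0
    have : a = 0 := funext fun i => by rw [← hPaco i, hPa0, Polynomial.coeff_zero]; rfl
    have hb0 : b = 0 := funext fun j => by rw [← hPbco j, hPb0, Polynomial.coeff_zero]; rfl
    simp [this, hb0, Prod.ext_iff]
  have hbij : Function.Bijective T := by
    refine ⟨hTinj, ?_⟩
    have hfr : Module.finrank F ((Fin d₁ → F) × (Fin d₂ → F))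
        = Module.finrank F (Fin (d₁ + d₂) → F) := by
      simp [Module.finrank_prod, Module.finrank_fin_fun]
    exact (LinearMap.injective_iff_surjective_of_finrank_eq_finrank hfr).mp hTinj
  set E := LinearEquiv.ofBijective T hbij with hEdef
  set M1 : Fin d₁ → Fin (d₁ + d₂) → F :=
    fun i ℓ => (E.symm fun j => if ℓ = j then 1 else 0).1 i with hM1def
  set M2 : Fin d₂ → Fin (d₁ + d₂) → F :=
    fun i ℓ => (E.symm fun j => if ℓ = j then 1 else 0).2 i with hM2def
  -- recovery of a vector from its image under T
  have hrec : ∀ x : (Fin d₁ → F) × (Fin d₂ → F),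
      x = ∑ ℓ : Fin (d₁ + d₂), (T x) ℓ • E.symm (fun j => if ℓ = j then (1 : F) else 0) := by
    intro x
    have h1 : x = E.symm (T x) := by
      have : T x = E x := rfl
      rw [this, E.symm_apply_apply]
    conv_lhs => rw [h1, pi_eq_sum_univ (T x)]
    rw [map_sum]
    simp only [map_smul]
  have hrec1 : ∀ (x : (Fin d₁ → F) × (Fin d₂ → F)) (i : Fin d₁),
      (∑ ℓ : Fin (d₁ + d₂), (T x) ℓ * M1 i ℓ) = x.1 i := by
    intro x i
    have h2 := congrArg (fun z : (Fin d₁ → F) × (Fin d₂ → F) => z.1 i) (hrec x)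
    simpa [M1, Prod.fst_sum, Prod.smul_fst] using h2.symm
  have hrec2 : ∀ (x : (Fin d₁ → F) × (Fin d₂ → F)) (j : Fin d₂),
      (∑ ℓ : Fin (d₁ + d₂), (T x) ℓ * M2 j ℓ) = x.2 j := by
    intro x j
    have h2 := congrArg (fun z : (Fin d₁ → F) × (Fin d₂ → F) => z.2 j) (hrec x)
    simpa [M2, Prod.snd_sum, Prod.smul_snd] using h2.symm
  -- scalar identities
  have scalarg1 : ∀ (i i' : Fin d₁),
      (∑ ℓ : Fin (d₁ + d₂), M1 i ℓ * (h₀ * X ^ (i' : ℕ)).coeff ℓ)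
        = if i' = i then 1 else 0 := by
    intro i i'
    have hx := hrec1 ((fun i'' => if i' = i'' then (1 : F) else 0), 0) i
    have hT : ∀ ℓ : Fin (d₁ + d₂),
        T ((fun i'' => if i' = i'' then (1 : F) else 0), 0) ℓ
          = (h₀ * X ^ (i' : ℕ)).coeff ℓ := by
      intro ℓ
      rw [hTapp]
      simp [mul_ite, Finset.sum_ite_eq]
    simp only [hT] at hx
    rw [← hx]
    exact Finset.sum_congr rfl fun ℓ _ => mul_comm _ _
  have scalarg2 : ∀ (i : Fin d₁) (j' : Fin d₂),
      (∑ ℓ : Fin (d₁ + d₂), M1 i ℓ * (g₀ * X ^ (j' : ℕ)).coeff ℓ) = 0 := by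
    intro i j'
    have hx := hrec1 (0, (fun j'' => if j' = j'' then (1 : F) else 0)) i
    have hT : ∀ ℓ : Fin (d₁ + d₂),
        T (0, (fun j'' => if j' = j'' then (1 : F) else 0)) ℓ
          = (g₀ * X ^ (j' : ℕ)).coeff ℓ := by
      intro ℓ
      rw [hTapp]
      simp [mul_ite, Finset.sum_ite_eq]
    simp only [hT] at hx
    have hx' : (∑ ℓ : Fin (d₁ + d₂), (g₀ * X ^ (j' : ℕ)).coeff ℓ * M1 i ℓ) = 0 := by
      simpa using hx
    rw [← hx']
    exact Finset.sum_congr rfl fun ℓ _ => mul_comm _ _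
  have scalarh1 : ∀ (j : Fin d₂) (i' : Fin d₁),
      (∑ ℓ : Fin (d₁ + d₂), M2 j ℓ * (h₀ * X ^ (i' : ℕ)).coeff ℓ) = 0 := by
    intro j i'
    have hx := hrec2 ((fun i'' => if i' = i'' then (1 : F) else 0), 0) j
    have hT : ∀ ℓ : Fin (d₁ + d₂),
        T ((fun i'' => if i' = i'' then (1 : F) else 0), 0) ℓ
          = (h₀ * X ^ (i' : ℕ)).coeff ℓ := by
      intro ℓ
      rw [hTapp]
      simp [mul_ite, Finset.sum_ite_eq]
    simp only [hT] at hx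
    have hx' : (∑ ℓ : Fin (d₁ + d₂), (h₀ * X ^ (i' : ℕ)).coeff ℓ * M2 j ℓ) = 0 := by
      simpa using hx
    rw [← hx']
    exact Finset.sum_congr rfl fun ℓ _ => mul_comm _ _
  have scalarh2 : ∀ (j j' : Fin d₂),
      (∑ ℓ : Fin (d₁ + d₂), M2 j ℓ * (g₀ * X ^ (j' : ℕ)).coeff ℓ)
        = if j' = j then 1 else 0 := by
    intro j j'
    have hx := hrec2 (0, (fun j'' => if j' = j'' then (1 : F) else 0)) j
    have hT : ∀ ℓ : Fin (d₁ + d₂),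
        T (0, (fun j'' => if j' = j'' then (1 : F) else 0)) ℓ
          = (g₀ * X ^ (j' : ℕ)).coeff ℓ := by
      intro ℓ
      rw [hTapp]
      simp [mul_ite, Finset.sum_ite_eq]
    simp only [hT] at hx
    rw [← hx]
    exact Finset.sum_congr rfl fun ℓ _ => mul_comm _ _
  -- lifts of g₀, h₀ back to R[X]
  set G₀ : Polynomial (MvPolynomial (Fin n) F) :=
    g₀.map (MvPolynomial.C : F →+* MvPolynomial (Fin n) F) with hG₀def
  set H₀ : Polynomial (MvPolynomial (Fin n) F) :=
    h₀.map (MvPolynomial.C : F →+* MvPolynomial (Fin n) F) with hH₀def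
  have hGco : ∀ m : ℕ, (g - G₀).coeff m ∈ I := by
    intro m
    rw [Polynomial.coeff_sub, hG₀def, Polynomial.coeff_map, hg₀def, Polynomial.coeff_map]
    exact aux_sub_const_mem _
  have hHco : ∀ m : ℕ, (h - H₀).coeff m ∈ I := by
    intro m
    rw [Polynomial.coeff_sub, hH₀def, Polynomial.coeff_map, hh₀def, Polynomial.coeff_map]
    exact aux_sub_const_mem _
  -- Step A : the error polynomial agrees with H₀ (g'-g) + G₀ (h'-h) mod I^(k+1)
  have hE : g' * h' - f = (h - H₀) * (g' - g) + ((g - G₀) * (h' - h) + (g' - g) * (h' - h))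
      + (H₀ * (g' - g) + G₀ * (h' - h)) := by
    rw [hf]; ring
  have hStepA : ∀ m : ℕ,
      (g' * h' - f).coeff m - (H₀ * (g' - g) + G₀ * (h' - h)).coeff m ∈ I ^ (k + 1) := by
    intro m
    have heq : (g' * h' - f).coeff m - (H₀ * (g' - g) + G₀ * (h' - h)).coeff m
        = ((h - H₀) * (g' - g)).coeff m
          + (((g - G₀) * (h' - h)).coeff m + ((g' - g) * (h' - h)).coeff m) := by
      rw [hE]
      simp only [Polynomial.coeff_add]
      ring
    rw [heq]
    refine Ideal.add_mem _ ?_ (Ideal.add_mem _ ?_ ?_)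
    · have := aux_coeff_mul_mem I (I ^ k) _ _ hHco hgk m
      rwa [← pow_succ'] at this
    · have := aux_coeff_mul_mem I (I ^ k) _ _ hGco hhk m
      rwa [← pow_succ'] at this
    · have := aux_coeff_mul_mem (I ^ k) (I ^ k) _ _ hgk hhk m
      rw [← pow_add] at this
      exact Ideal.pow_le_pow_right (by omega) this
  -- Step B : expansion of the main term's coefficients
  have hW1 : ∀ ℓ : ℕ, (H₀ * (g' - g)).coeff ℓ
      = ∑ i : Fin d₁, MvPolynomial.C ((h₀ * X ^ (i : ℕ)).coeff ℓ) * (g' - g).coeff i := by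
    intro ℓ
    rw [aux_mul_coeff_expand H₀ (g' - g) d₁ hδg ℓ]
    refine Finset.sum_congr rfl fun i _ => ?_
    congr 1
    rw [hH₀def, show (h₀.map (MvPolynomial.C : F →+* MvPolynomial (Fin n) F)) * X ^ (i : ℕ)
        = (h₀ * X ^ (i : ℕ)).map (MvPolynomial.C : F →+* MvPolynomial (Fin n) F) by
      rw [Polynomial.map_mul, Polynomial.map_pow, Polynomial.map_X],
      Polynomial.coeff_map]
  have hW2 : ∀ ℓ : ℕ, (G₀ * (h' - h)).coeff ℓ
      = ∑ j : Fin d₂, MvPolynomial.C ((g₀ * X ^ (j : ℕ)).coeff ℓ) * (h' - h).coeff j := by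
    intro ℓ
    rw [aux_mul_coeff_expand G₀ (h' - h) d₂ hδh ℓ]
    refine Finset.sum_congr rfl fun j _ => ?_
    congr 1
    rw [hG₀def, show (g₀.map (MvPolynomial.C : F →+* MvPolynomial (Fin n) F)) * X ^ (j : ℕ)
        = (g₀ * X ^ (j : ℕ)).map (MvPolynomial.C : F →+* MvPolynomial (Fin n) F) by
      rw [Polynomial.map_mul, Polynomial.map_pow, Polynomial.map_X],
      Polynomial.coeff_map]
  -- Step C : the key lifting identities
  have hkey1 : ∀ i : Fin d₁,
      (∑ ℓ : Fin (d₁ + d₂), MvPolynomial.C (M1 i ℓ)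
          * (H₀ * (g' - g) + G₀ * (h' - h)).coeff (ℓ : ℕ)) = (g' - g).coeff i := by
    intro i
    have expand : ∀ ℓ : Fin (d₁ + d₂),
        MvPolynomial.C (M1 i ℓ) * (H₀ * (g' - g) + G₀ * (h' - h)).coeff (ℓ : ℕ)
        = (∑ i' : Fin d₁, MvPolynomial.C (M1 i ℓ * (h₀ * X ^ (i' : ℕ)).coeff ℓ)
              * (g' - g).coeff i')
          + (∑ j' : Fin d₂, MvPolynomial.C (M1 i ℓ * (g₀ * X ^ (j' : ℕ)).coeff ℓ)
              * (h' - h).coeff j') := by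
      intro ℓ
      rw [Polynomial.coeff_add, hW1, hW2, mul_add, Finset.mul_sum, Finset.mul_sum]
      congr 1 <;> exact Finset.sum_congr rfl fun i' _ => by rw [map_mul]; ring
    rw [Finset.sum_congr rfl fun ℓ _ => expand ℓ, Finset.sum_add_distrib,
      Finset.sum_comm, Finset.sum_comm (t := Finset.univ (α := Fin d₂))]
    have e1 : ∀ i' : Fin d₁,
        (∑ ℓ : Fin (d₁ + d₂), MvPolynomial.C (M1 i ℓ * (h₀ * X ^ (i' : ℕ)).coeff ℓ)
          * (g' - g).coeff i')
        = MvPolynomial.C (if i' = i then (1 : F) else 0) * (g' - g).coeff i' := by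
      intro i'
      rw [← Finset.sum_mul, ← map_sum, scalarg1 i i']
    have e2 : ∀ j' : Fin d₂,
        (∑ ℓ : Fin (d₁ + d₂), MvPolynomial.C (M1 i ℓ * (g₀ * X ^ (j' : ℕ)).coeff ℓ)
          * (h' - h).coeff j') = 0 := by
      intro j'
      rw [← Finset.sum_mul, ← map_sum, scalarg2 i j', map_zero, zero_mul]
    rw [Finset.sum_congr rfl fun i' _ => e1 i', Finset.sum_congr rfl fun j' _ => e2 j',
      Finset.sum_const_zero, add_zero]
    simp [apply_ite (MvPolynomial.C (σ := Fin n) (R := F)), ite_mul, Finset.sum_ite_eq,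
      Finset.mem_univ]
  have hkey2 : ∀ j : Fin d₂,
      (∑ ℓ : Fin (d₁ + d₂), MvPolynomial.C (M2 j ℓ)
          * (H₀ * (g' - g) + G₀ * (h' - h)).coeff (ℓ : ℕ)) = (h' - h).coeff j := by
    intro j
    have expand : ∀ ℓ : Fin (d₁ + d₂),
        MvPolynomial.C (M2 j ℓ) * (H₀ * (g' - g) + G₀ * (h' - h)).coeff (ℓ : ℕ)
        = (∑ i' : Fin d₁, MvPolynomial.C (M2 j ℓ * (h₀ * X ^ (i' : ℕ)).coeff ℓ)
              * (g' - g).coeff i')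
          + (∑ j' : Fin d₂, MvPolynomial.C (M2 j ℓ * (g₀ * X ^ (j' : ℕ)).coeff ℓ)
              * (h' - h).coeff j') := by
      intro ℓ
      rw [Polynomial.coeff_add, hW1, hW2, mul_add, Finset.mul_sum, Finset.mul_sum]
      congr 1 <;> exact Finset.sum_congr rfl fun i' _ => by rw [map_mul]; ring
    rw [Finset.sum_congr rfl fun ℓ _ => expand ℓ, Finset.sum_add_distrib,
      Finset.sum_comm, Finset.sum_comm (t := Finset.univ (α := Fin d₂))]
    have e1 : ∀ i' : Fin d₁,
        (∑ ℓ : Fin (d₁ + d₂), MvPolynomial.C (M2 j ℓ * (h₀ * X ^ (i' : ℕ)).coeff ℓ)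
          * (g' - g).coeff i') = 0 := by
      intro i'
      rw [← Finset.sum_mul, ← map_sum, scalarh1 j i', map_zero, zero_mul]
    have e2 : ∀ j' : Fin d₂,
        (∑ ℓ : Fin (d₁ + d₂), MvPolynomial.C (M2 j ℓ * (g₀ * X ^ (j' : ℕ)).coeff ℓ)
          * (h' - h).coeff j')
        = MvPolynomial.C (if j' = j then (1 : F) else 0) * (h' - h).coeff j' := by
      intro j'
      rw [← Finset.sum_mul, ← map_sum, scalarh2 j j']
    rw [Finset.sum_congr rfl fun i' _ => e1 i', Finset.sum_congr rfl fun j' _ => e2 j',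
      Finset.sum_const_zero, zero_add]
    simp [apply_ite (MvPolynomial.C (σ := Fin n) (R := F)), ite_mul, Finset.sum_ite_eq,
      Finset.mem_univ]
  -- conclusion
  refine ⟨fun i ℓ => -(M1 i ℓ), fun j ℓ => -(M2 j ℓ), fun i => ?_, fun j => ?_⟩
  · have heq : g.coeff i - (g'.coeff i + ∑ ℓ : Fin (d₁ + d₂),
        MvPolynomial.C (-(M1 i ℓ)) * (g' * h' - f).coeff ℓ)
        = ∑ ℓ : Fin (d₁ + d₂), MvPolynomial.C (M1 i ℓ)
            * ((g' * h' - f).coeff (ℓ : ℕ)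
              - (H₀ * (g' - g) + G₀ * (h' - h)).coeff (ℓ : ℕ)) := by
      have h4 : ∀ ℓ : Fin (d₁ + d₂), MvPolynomial.C (M1 i ℓ)
          * ((g' * h' - f).coeff (ℓ : ℕ)
            - (H₀ * (g' - g) + G₀ * (h' - h)).coeff (ℓ : ℕ))
          = MvPolynomial.C (M1 i ℓ) * (g' * h' - f).coeff (ℓ : ℕ)
            - MvPolynomial.C (M1 i ℓ)
              * (H₀ * (g' - g) + G₀ * (h' - h)).coeff (ℓ : ℕ) := fun ℓ => by ring
      rw [Finset.sum_congr rfl fun ℓ _ => h4 ℓ, Finset.sum_sub_distrib, hkey1 i]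
      have h5 : ∀ ℓ : Fin (d₁ + d₂), MvPolynomial.C (-(M1 i ℓ)) * (g' * h' - f).coeff (ℓ : ℕ)
          = -(MvPolynomial.C (M1 i ℓ) * (g' * h' - f).coeff (ℓ : ℕ)) := fun ℓ => by
        rw [map_neg]; ring
      rw [Finset.sum_congr rfl fun ℓ _ => h5 ℓ, Finset.sum_neg_distrib,
        Polynomial.coeff_sub]
      ring
    rw [heq]
    exact Ideal.sum_mem _ fun ℓ _ => Ideal.mul_mem_left _ _ (hStepA ℓ)
  · have heq : h.coeff j - (h'.coeff j + ∑ ℓ : Fin (d₁ + d₂),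
        MvPolynomial.C (-(M2 j ℓ)) * (g' * h' - f).coeff ℓ)
        = ∑ ℓ : Fin (d₁ + d₂), MvPolynomial.C (M2 j ℓ)
            * ((g' * h' - f).coeff (ℓ : ℕ)
              - (H₀ * (g' - g) + G₀ * (h' - h)).coeff (ℓ : ℕ)) := by
      have h4 : ∀ ℓ : Fin (d₁ + d₂), MvPolynomial.C (M2 j ℓ)
          * ((g' * h' - f).coeff (ℓ : ℕ)
            - (H₀ * (g' - g) + G₀ * (h' - h)).coeff (ℓ : ℕ))
          = MvPolynomial.C (M2 j ℓ) * (g' * h' - f).coeff (ℓ : ℕ)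
            - MvPolynomial.C (M2 j ℓ)
              * (H₀ * (g' - g) + G₀ * (h' - h)).coeff (ℓ : ℕ) := fun ℓ => by ring
      rw [Finset.sum_congr rfl fun ℓ _ => h4 ℓ, Finset.sum_sub_distrib, hkey2 j]
      have h5 : ∀ ℓ : Fin (d₁ + d₂), MvPolynomial.C (-(M2 j ℓ)) * (g' * h' - f).coeff (ℓ : ℕ)
          = -(MvPolynomial.C (M2 j ℓ) * (g' * h' - f).coeff (ℓ : ℕ)) := fun ℓ => by
        rw [map_neg]; ring
      rw [Finset.sum_congr rfl fun ℓ _ => h5 ℓ, Finset.sum_neg_distrib,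
        Polynomial.coeff_sub]
      ring
    rw [heq]
    exact Ideal.sum_mem _ fun ℓ _ => Ideal.mul_mem_left _ _ (hStepA ℓ)
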